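/- Let (G,H) be a feasible instance with s1t1 ∈ EH and s1 ≠ t1. Then there exists an edge e = s1s1' of G incident to s1 such that the instance (G_e, H_e) obtained by the local move along e is feasible. -/

import Mathlib

/-!
We encode a multigraph on vertex type `V` with edge-index type `E` by a map
`G : E → V × V`: the edge with index `e` joins the (unordered) endpoints
`(G e).1` and `(G e).2`.
-/

/-- The degree of `v` in the multigraph `G`: the number of edge-ends of `G`
incident to `v` (a loop counts twice). -/
noncomputable def mdeg {V E : Type} (G : E → V × V) (v : V) : ℕ :=
  Set.ncard {p : E × Bool | (cond p.2 (G p.1).1 (G p.1).2) = v}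

/-- `mcut G U` is `d_G(U)`: the number of edges of `G` having exactly one
endpoint in `U`. -/
noncomputable def mcut {V E : Type} (G : E → V × V) (U : Set V) : ℕ :=
  Set.ncard {e : E | ((G e).1 ∈ U ∧ (G e).2 ∉ U) ∨ ((G e).2 ∈ U ∧ (G e).1 ∉ U)}

/-- Walks in the multigraph `G`; an edge may be traversed in either direction. -/
inductive MWalk {V E : Type} (G : E → V × V) : V → V → Type where
  | nil (v : V) : MWalk G v v
  | cons {u v w : V} (e : E) (he : G e = (u, v) ∨ G e = (v, u)) (tail : MWalk G v w) :
      MWalk G u w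

namespace MWalk
/-- The list of edges traversed by a walk. -/
def edges {V E : Type} {G : E → V × V} : {u v : V} → MWalk G u v → List E
  | _, _, nil _ => []
  | _, _, cons e _ p => e :: p.edges
end MWalk

/-- An instance `(G, H)` (`H` is the demand multigraph, on the same vertex set)
is feasible if the demand edges can be routed by pairwise edge-disjoint paths
of `G`: for each demand edge `i` there is a walk of `G` connecting its two
endpoints, the walks being pairwise edge-disjoint. -/
def MFeasible {V E E' : Type} (G : E → V × V) (H : E' → V × V) : Prop :=
  ∃ P : (i : E') → MWalk G (H i).1 (H i).2,
    ∀ i j : E', i ≠ j → List.Disjoint (P i).edges (P j).edges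

/-- The multigraph `G` is connected (all of its vertex set lies in one
connected component). -/
def MConnected {V E : Type} (G : E → V × V) : Prop :=
  ∀ u v : V, Nonempty (MWalk G u v)

/-- The subgraph `G[U]` induced by `U` is connected: any two vertices of `U`
are joined by a walk all of whose edges have both endpoints in `U`. -/
def MInducedConnected {V E : Type} (G : E → V × V) (U : Set V) : Prop :=
  ∀ u ∈ U, ∀ v ∈ U, ∃ p : MWalk G u v, ∀ e ∈ p.edges, (G e).1 ∈ U ∧ (G e).2 ∈ U

/-- The instance `(G, H)` is Eulerian: every vertex of `G + H` has even degree. -/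
def MEulerian {V E E' : Type} (G : E → V × V) (H : E' → V × V) : Prop :=
  ∀ v : V, Even (mdeg G v + mdeg H v)

lemma mwalk_lift {V E : Type} {G : E → V × V} (e0 : E) :
    ∀ {a b : V} (p : MWalk G a b), e0 ∉ p.edges →
    ∃ p' : MWalk (fun e : {e : E // e ≠ e0} => G e.1) a b,
      p'.edges.map Subtype.val = p.edges := by
  intro a b p
  induction p with
  | nil v => intro _; exact ⟨MWalk.nil v, rfl⟩
  | cons e he tail ih =>
    intro hmem
    simp only [MWalk.edges, List.mem_cons, not_or] at hmem
    obtain ⟨tail', ht⟩ := ih hmem.2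
    exact ⟨MWalk.cons ⟨e, Ne.symm hmem.1⟩ he tail', by simp [MWalk.edges, ht]⟩

lemma mwalk_split {V E : Type} {G : E → V × V} {e : E} :
    ∀ {a c : V} (p : MWalk G a c), e ∈ p.edges →
    ∃ (x y : V) (_ : G e = (x, y) ∨ G e = (y, x)) (rest : MWalk G y c),
      rest.edges.length < p.edges.length ∧ rest.edges ⊆ p.edges := by
  intro a c p
  induction p with
  | nil v => intro h; simp [MWalk.edges] at h
  | cons e' he' tail ih =>
    intro hmem
    by_cases h : e' = e
    · subst h
      exact ⟨_, _, he', tail, by simp [MWalk.edges], by simp [MWalk.edges]⟩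
    · have : e ∈ tail.edges := by
        simp only [MWalk.edges, List.mem_cons] at hmem
        tauto
      obtain ⟨x, y, hxy, rest, hlen, hsub⟩ := ih this
      exact ⟨x, y, hxy, rest, by simp only [MWalk.edges, List.length_cons]; omega,
        fun a ha => by simp [MWalk.edges]; exact Or.inr (hsub ha)⟩

lemma mwalk_first_edge {V E : Type} {G : E → V × V} :
    ∀ (n : ℕ) {u v : V} (p : MWalk G u v), p.edges.length ≤ n → u ≠ v →
    ∃ (e0 : E) (s1' : V) (_ : G e0 = (u, s1') ∨ G e0 = (s1', u)) (q : MWalk G s1' v),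
      e0 ∈ p.edges ∧ e0 ∉ q.edges ∧ q.edges ⊆ p.edges := by
  intro n
  induction n with
  | zero =>
    intro u v p hlen hne
    cases p with
    | nil => exact absurd rfl hne
    | cons e he tail => simp [MWalk.edges] at hlen
  | succ n ih =>
    intro u v p hlen hne
    cases p with
    | nil => exact absurd rfl hne
    | cons e he tail =>
      rename_i w
      by_cases hmem : e ∈ tail.edges
      · obtain ⟨x, y, hxy, rest, hl, hs⟩ := mwalk_split tail hmem
        simp only [MWalk.edges, List.length_cons] at hlen
        have hy : y = u ∨ y = w := by
          rcases he with h1 | h1 <;> rcases hxy with h2 | h2 <;>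
            rw [h1] at h2 <;>
            first
            | exact Or.inr (congrArg Prod.snd h2).symm
            | exact Or.inl (congrArg Prod.fst h2).symm
            | exact Or.inl (congrArg Prod.snd h2).symm
            | exact Or.inr (congrArg Prod.fst h2).symm
        rcases hy with rfl | rfl
        · obtain ⟨e0, s1', he0, q, h1, h2, h3⟩ := ih rest (by omega) hne
          exact ⟨e0, s1', he0, q,
            by simp only [MWalk.edges, List.mem_cons]; exact Or.inr (hs h1), h2,
            fun a ha => by
              simp only [MWalk.edges, List.mem_cons]; exact Or.inr (hs (h3 ha))⟩
        · have hlen' : (MWalk.cons e he rest).edges.length ≤ n := by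
            simp only [MWalk.edges, List.length_cons]; omega
          obtain ⟨e0, s1', he0, q, h1, h2, h3⟩ := ih (MWalk.cons e he rest) hlen' hne
          have hsub : (MWalk.cons e he rest).edges ⊆ (MWalk.cons e he tail).edges := by
            intro a ha
            simp only [MWalk.edges, List.mem_cons] at ha ⊢
            rcases ha with rfl | ha
            · exact Or.inl rfl
            · exact Or.inr (hs ha)
          exact ⟨e0, s1', he0, q, hsub h1, h2, fun a ha => hsub (h3 ha)⟩
      · exact ⟨e, w, he, tail, by simp [MWalk.edges], hmem, by simp [MWalk.edges]⟩

lemma mwalk_cast {V E : Type} {G : E → V × V} {a b a' b' : V}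
    (ha : a = a') (hb : b = b') (p : MWalk G a b) :
    ∃ p' : MWalk G a' b', p'.edges = p.edges := by
  subst ha; subst hb; exact ⟨p, rfl⟩

/-- If `(G, H)` is a feasible instance with a demand edge
`s₁t₁` where `s₁ ≠ t₁`, then some local move applied to `s₁` is feasible:
there is an edge `e = s₁s₁'` of `G` such that the instance `(G_e, H_e)`
(delete `e` from `G`, replace the demand edge `s₁t₁` by `s₁'t₁`) is feasible. -/
theorem statement13 {V E E' : Type} [DecidableEq E']
    (G : E → V × V) (H : E' → V × V)
    (s1 t1 : V) (i0 : E') (hi0 : H i0 = (s1, t1)) (hne : s1 ≠ t1)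
    (hfeas : MFeasible G H) :
    ∃ (e0 : E) (s1' : V),
      (G e0 = (s1, s1') ∨ G e0 = (s1', s1)) ∧
      MFeasible (fun e : {e : E // e ≠ e0} => G e.1)
        (Function.update H i0 (s1', t1)) := by
  have h1 : s1 = (H i0).1 := by rw [hi0]
  have h2 : t1 = (H i0).2 := by rw [hi0]
  subst h1; subst h2
  obtain ⟨P, hP⟩ := hfeas
  obtain ⟨e0, s1', he0, q, hmem, hnotmem, hsub⟩ :=
    mwalk_first_edge (P i0).edges.length (P i0) le_rfl hne
  refine ⟨e0, s1', he0, ?_⟩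
  set G' := fun e : {e : E // e ≠ e0} => G e.1 with hG'
  set Q : E' → List E := fun i => if i = i0 then q.edges else (P i).edges with hQ
  have hQdisj : ∀ i j : E', i ≠ j → List.Disjoint (Q i) (Q j) := by
    intro i j hij
    by_cases hi : i = i0
    · subst hi
      simp only [hQ, if_pos rfl, if_neg (Ne.symm hij)]
      exact fun a ha => hP i j hij (hsub ha)
    · by_cases hj : j = i0
      · subst hj
        simp only [hQ, if_neg hi, if_pos rfl]
        exact fun a ha hb => hP j i (Ne.symm hij) (hsub hb) ha
      · simp only [hQ, if_neg hi, if_neg hj]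
        exact hP i j hij
  have key : ∀ i : E',
      ∃ w : MWalk G' ((Function.update H i0 (s1', (H i0).2) i).1)
        ((Function.update H i0 (s1', (H i0).2) i).2),
      w.edges.map Subtype.val ⊆ Q i := by
    intro i
    by_cases hi : i = i0
    · subst hi
      obtain ⟨q', hq'⟩ := mwalk_lift e0 q hnotmem
      obtain ⟨w, hw⟩ := mwalk_cast
        (show s1' = (Function.update H i (s1', (H i).2) i).1 by
          rw [Function.update_self])
        (show (H i).2 = (Function.update H i (s1', (H i).2) i).2 by
          rw [Function.update_self])
        q'
      refine ⟨w, ?_⟩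
      rw [hw, hq']
      simp only [hQ, if_pos rfl]
      exact fun a ha => ha
    · have : e0 ∉ (P i).edges := fun h => hP i0 i (fun e => hi e.symm) hmem h
      obtain ⟨p', hp'⟩ := mwalk_lift e0 (P i) this
      obtain ⟨w, hw⟩ := mwalk_cast
        (show (H i).1 = (Function.update H i0 (s1', (H i0).2) i).1 by
          rw [Function.update_of_ne hi])
        (show (H i).2 = (Function.update H i0 (s1', (H i0).2) i).2 by
          rw [Function.update_of_ne hi])
        p'
      refine ⟨w, ?_⟩
      rw [hw, hp']
      simp only [hQ, if_neg hi]
      exact fun a ha => ha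
  refine ⟨fun i => (key i).choose, ?_⟩
  intro i j hij a ha hb
  have hai : a.val ∈ Q i := (key i).choose_spec (List.mem_map_of_mem (f := Subtype.val) ha)
  have haj : a.val ∈ Q j := (key j).choose_spec (List.mem_map_of_mem (f := Subtype.val) hb)
  exact hQdisj i j hij hai haj
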